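/- arXiv:2501.07791 — 3 statements merged into one kernel-verified Lean document; each statement's English description precedes it below -/
import Mathlib

section
/- For every prime p, the group K_p is generated by the five elements a = diag(1,p,1,1,1), 1+e₁₂, 1+e₂₄, 1+e₂₅, 1+e₄₅, where e_{ij} denotes the 5×5 matrix with (i,j) entry 1 and all other entries 0. In particular K_p is finitely generated. -/
def Zp (p : ℕ) : AddSubgroup ℚ where
  carrier := {q : ℚ | ∃ (k : ℤ) (n : ℕ), q * (p : ℚ) ^ n = (k : ℚ)}
  zero_mem' := ⟨0, 0, by norm_num⟩
  add_mem' := by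
    rintro a b ⟨k1, n1, h1⟩ ⟨k2, n2, h2⟩
    refine ⟨k1 * (p : ℤ) ^ n2 + k2 * (p : ℤ) ^ n1, n1 + n2, ?_⟩
    push_cast
    calc (a + b) * (p : ℚ) ^ (n1 + n2)
        = a * (p : ℚ) ^ n1 * (p : ℚ) ^ n2 + b * (p : ℚ) ^ n2 * (p : ℚ) ^ n1 := by
          rw [pow_add]; ring
      _ = (k1 : ℚ) * (p : ℚ) ^ n2 + (k2 : ℚ) * (p : ℚ) ^ n1 := by rw [h1, h2]
  neg_mem' := by
    rintro a ⟨k, n, h⟩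
    refine ⟨-k, n, ?_⟩
    push_cast
    rw [neg_mul, h]


lemma Zp.mul_mem {p : ℕ} {a b : ℚ} (ha : a ∈ Zp p) (hb : b ∈ Zp p) : a * b ∈ Zp p := by
  obtain ⟨k1, n1, h1⟩ := ha
  obtain ⟨k2, n2, h2⟩ := hb
  refine ⟨k1 * k2, n1 + n2, ?_⟩
  push_cast
  calc a * b * (p : ℚ) ^ (n1 + n2) = (a * (p : ℚ) ^ n1) * (b * (p : ℚ) ^ n2) := by
        rw [pow_add]; ring
    _ = (k1 : ℚ) * (k2 : ℚ) := by rw [h1, h2]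

lemma Zp.intCast_mem (p : ℕ) (k : ℤ) : (k : ℚ) ∈ Zp p := ⟨k, 0, by norm_num⟩

lemma Zp.zpow_mem {p : ℕ} (hp : (p : ℚ) ≠ 0) (n : ℤ) : (p : ℚ) ^ n ∈ Zp p := by
  rcases n with k | k
  · refine ⟨(p : ℤ) ^ k, 0, ?_⟩
    push_cast
    simp
  · refine ⟨1, k + 1, ?_⟩
    rw [zpow_negSucc]
    push_cast
    rw [inv_mul_cancel₀ (pow_ne_zero _ hp)]

/-- Membership predicate for the group `K_p`: upper triangular `5 × 5` matrices with
rows `(1, x₁₂, 0, x₁₄, x₁₅)`, `(0, pⁿ, 0, x₂₄, x₂₅)`, `(0,0,1,0,0)`, `(0,0,0,1,m)`,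
`(0,0,0,0,1)` where the `xᵢⱼ ∈ ℤ[1/p]`, `n, m ∈ ℤ`. -/
def KpPred (p : ℕ) (M : Matrix (Fin 5) (Fin 5) ℚ) : Prop :=
  (∃ n : ℤ, M 1 1 = (p : ℚ) ^ n) ∧ (∃ m : ℤ, M 3 4 = (m : ℚ)) ∧
  M 0 0 = 1 ∧ M 2 2 = 1 ∧ M 3 3 = 1 ∧ M 4 4 = 1 ∧
  M 0 1 ∈ Zp p ∧ M 0 3 ∈ Zp p ∧ M 0 4 ∈ Zp p ∧ M 1 3 ∈ Zp p ∧ M 1 4 ∈ Zp p ∧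
  M 0 2 = 0 ∧ M 1 2 = 0 ∧ M 2 3 = 0 ∧ M 2 4 = 0 ∧
  M 1 0 = 0 ∧ M 2 0 = 0 ∧ M 2 1 = 0 ∧
  M 3 0 = 0 ∧ M 3 1 = 0 ∧ M 3 2 = 0 ∧
  M 4 0 = 0 ∧ M 4 1 = 0 ∧ M 4 2 = 0 ∧ M 4 3 = 0

/-- The group `K_p`, as a subgroup of the units of the `5 × 5` matrices over `ℚ`. -/
def Kp (p : ℕ) (hp : p.Prime) : Subgroup (Matrix (Fin 5) (Fin 5) ℚ)ˣ where
  carrier := {M | KpPred p M.val}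
  one_mem' := by
    refine ⟨⟨0, ?_⟩, ⟨0, ?_⟩, ?_, ?_, ?_, ?_, ?_, ?_, ?_, ?_, ?_, ?_, ?_, ?_, ?_, ?_, ?_,
      ?_, ?_, ?_, ?_, ?_, ?_, ?_, ?_⟩ <;>
      simp [Matrix.one_apply, (Zp p).zero_mem]
  mul_mem' := by
    have hp0 : (p : ℚ) ≠ 0 := Nat.cast_ne_zero.mpr hp.ne_zero
    rintro A B ⟨⟨na, a11⟩, ⟨ma, a34⟩, a00, a22, a33, a44, a01, a03, a04, a13, a14,
      a02, a12, a23, a24, a10, a20, a21, a30, a31, a32, a40, a41, a42, a43⟩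
      ⟨⟨nb, b11⟩, ⟨mb, b34⟩, b00, b22, b33, b44, b01, b03, b04, b13, b14,
      b02, b12, b23, b24, b10, b20, b21, b30, b31, b32, b40, b41, b42, b43⟩
    have e : ∀ i j, (A.val * B.val) i j =
        A.val i 0 * B.val 0 j + A.val i 1 * B.val 1 j + A.val i 2 * B.val 2 j +
          A.val i 3 * B.val 3 j + A.val i 4 * B.val 4 j := by
      intro i j
      rw [Matrix.mul_apply, Fin.sum_univ_five]
    refine ⟨⟨na + nb, ?_⟩, ⟨ma + mb, ?_⟩, ?_, ?_, ?_, ?_, ?_, ?_, ?_, ?_, ?_, ?_, ?_, ?_,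
      ?_, ?_, ?_, ?_, ?_, ?_, ?_, ?_, ?_, ?_, ?_⟩ <;>
      simp only [Units.val_mul, e, a11, a34, a00, a22, a33, a44, a02, a12, a23, a24,
        a10, a20, a21, a30, a31, a32, a40, a41, a42, a43,
        b11, b34, b00, b22, b33, b44, b02, b12, b23, b24,
        b10, b20, b21, b30, b31, b32, b40, b41, b42, b43,
        one_mul, mul_one, mul_zero, zero_mul, add_zero, zero_add]
    · exact (zpow_add₀ hp0 na nb).symm
    · push_cast; ring
    · exact (Zp p).add_mem b01 (Zp.mul_mem a01 (Zp.zpow_mem hp0 nb))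
    · exact (Zp p).add_mem ((Zp p).add_mem b03 (Zp.mul_mem a01 b13)) a03
    · exact (Zp p).add_mem ((Zp p).add_mem ((Zp p).add_mem b04 (Zp.mul_mem a01 b14))
        (Zp.mul_mem a03 (Zp.intCast_mem p mb))) a04
    · exact (Zp p).add_mem (Zp.mul_mem (Zp.zpow_mem hp0 na) b13) a13
    · exact (Zp p).add_mem ((Zp p).add_mem (Zp.mul_mem (Zp.zpow_mem hp0 na) b14)
        (Zp.mul_mem a13 (Zp.intCast_mem p mb))) a14
  inv_mem' := by
    have hp0 : (p : ℚ) ≠ 0 := Nat.cast_ne_zero.mpr hp.ne_zero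
    rintro A ⟨⟨na, a11⟩, ⟨ma, a34⟩, a00, a22, a33, a44, a01, a03, a04, a13, a14,
      a02, a12, a23, a24, a10, a20, a21, a30, a31, a32, a40, a41, a42, a43⟩
    have hu : A.val 1 1 ≠ 0 := by
      rw [a11]; exact zpow_ne_zero _ hp0
    have hinv : (A⁻¹).val =
        !![1, -(A.val 0 1) * (A.val 1 1)⁻¹, 0,
             A.val 0 1 * A.val 1 3 * (A.val 1 1)⁻¹ - A.val 0 3,
             -(A.val 0 1) * (A.val 1 3 * A.val 3 4 - A.val 1 4) * (A.val 1 1)⁻¹ +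
               A.val 0 3 * A.val 3 4 - A.val 0 4;
           0, (A.val 1 1)⁻¹, 0, -(A.val 1 3) * (A.val 1 1)⁻¹,
             (A.val 1 3 * A.val 3 4 - A.val 1 4) * (A.val 1 1)⁻¹;
           0, 0, 1, 0, 0;
           0, 0, 0, 1, -(A.val 3 4);
           0, 0, 0, 0, 1] := by
      apply Units.inv_eq_of_mul_eq_one_right
      ext i j
      rw [Matrix.mul_apply, Fin.sum_univ_five]
      fin_cases i <;> fin_cases j <;>
        simp [Matrix.one_apply, Matrix.vecHead, Matrix.vecTail,
          a00, a22, a33, a44, a02, a12, a23, a24, a10, a20, a21, a30, a31, a32,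
          a40, a41, a42, a43, -mul_eq_zero] <;>
        field_simp <;>
        ring
    refine ⟨⟨-na, ?_⟩, ⟨-ma, ?_⟩, ?_, ?_, ?_, ?_, ?_, ?_, ?_, ?_, ?_, ?_, ?_, ?_, ?_, ?_,
      ?_, ?_, ?_, ?_, ?_, ?_, ?_, ?_, ?_⟩ <;> rw [hinv]
    · show (A.val 1 1)⁻¹ = (p : ℚ) ^ (-na)
      rw [a11, ← zpow_neg]
    · show -(A.val 3 4) = ((-ma : ℤ) : ℚ)
      rw [a34]; push_cast; ring
    · show (1 : ℚ) = 1; rfl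
    · show (1 : ℚ) = 1; rfl
    · show (1 : ℚ) = 1; rfl
    · show (1 : ℚ) = 1; rfl
    · show -(A.val 0 1) * (A.val 1 1)⁻¹ ∈ Zp p
      rw [a11, ← zpow_neg]
      exact Zp.mul_mem ((Zp p).neg_mem a01) (Zp.zpow_mem hp0 (-na))
    · show A.val 0 1 * A.val 1 3 * (A.val 1 1)⁻¹ - A.val 0 3 ∈ Zp p
      rw [a11, ← zpow_neg]
      exact (Zp p).sub_mem (Zp.mul_mem (Zp.mul_mem a01 a13) (Zp.zpow_mem hp0 (-na))) a03
    · show -(A.val 0 1) * (A.val 1 3 * A.val 3 4 - A.val 1 4) * (A.val 1 1)⁻¹ +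
          A.val 0 3 * A.val 3 4 - A.val 0 4 ∈ Zp p
      rw [a11, ← zpow_neg, a34]
      refine (Zp p).sub_mem ((Zp p).add_mem ?_ ?_) a04
      · exact Zp.mul_mem (Zp.mul_mem ((Zp p).neg_mem a01)
          ((Zp p).sub_mem (Zp.mul_mem a13 (Zp.intCast_mem p ma)) a14)) (Zp.zpow_mem hp0 (-na))
      · exact Zp.mul_mem a03 (Zp.intCast_mem p ma)
    · show -(A.val 1 3) * (A.val 1 1)⁻¹ ∈ Zp p
      rw [a11, ← zpow_neg]
      exact Zp.mul_mem ((Zp p).neg_mem a13) (Zp.zpow_mem hp0 (-na))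
    · show (A.val 1 3 * A.val 3 4 - A.val 1 4) * (A.val 1 1)⁻¹ ∈ Zp p
      rw [a11, ← zpow_neg, a34]
      exact Zp.mul_mem ((Zp p).sub_mem (Zp.mul_mem a13 (Zp.intCast_mem p ma)) a14)
        (Zp.zpow_mem hp0 (-na))
    · show (0 : ℚ) = 0; rfl
    · show (0 : ℚ) = 0; rfl
    · show (0 : ℚ) = 0; rfl
    · show (0 : ℚ) = 0; rfl
    · show (0 : ℚ) = 0; rfl
    · show (0 : ℚ) = 0; rfl
    · show (0 : ℚ) = 0; rfl
    · show (0 : ℚ) = 0; rfl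
    · show (0 : ℚ) = 0; rfl
    · show (0 : ℚ) = 0; rfl
    · show (0 : ℚ) = 0; rfl
    · show (0 : ℚ) = 0; rfl
    · show (0 : ℚ) = 0; rfl
    · show (0 : ℚ) = 0; rfl


open Matrix

/-- Elementary unipotent unit `1 + stdBasisMatrix i j q`, for `j ≠ i`. -/
def EU (i j : Fin 5) (hij : j ≠ i) (q : ℚ) : (Matrix (Fin 5) (Fin 5) ℚ)ˣ where
  val := 1 + Matrix.single i j q
  inv := 1 - Matrix.single i j q
  val_inv := by
    have h0 : Matrix.single i j q * Matrix.single i j q = 0 :=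
      Matrix.single_mul_single_of_ne q i j _ hij q
    calc (1 + Matrix.single i j q) * (1 - Matrix.single i j q)
        = 1 - Matrix.single i j q * Matrix.single i j q := by noncomm_ring
      _ = 1 := by rw [h0, sub_zero]
  inv_val := by
    have h0 : Matrix.single i j q * Matrix.single i j q = 0 :=
      Matrix.single_mul_single_of_ne q i j _ hij q
    calc (1 - Matrix.single i j q) * (1 + Matrix.single i j q)
        = 1 - Matrix.single i j q * Matrix.single i j q := by noncomm_ring
      _ = 1 := by rw [h0, sub_zero]

@[simp] lemma EU_val (i j : Fin 5) (hij : j ≠ i) (q : ℚ) :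
    (EU i j hij q).val = 1 + Matrix.single i j q := rfl

lemma EU_mul (i j : Fin 5) (hij : j ≠ i) (q r : ℚ) :
    EU i j hij q * EU i j hij r = EU i j hij (q + r) := by
  ext : 1
  show (1 + Matrix.single i j q) * (1 + Matrix.single i j r)
      = 1 + Matrix.single i j (q + r)
  have h0 : Matrix.single i j q * Matrix.single i j r = 0 :=
    Matrix.single_mul_single_of_ne q i j _ hij r
  rw [Matrix.single_add]
  calc (1 + Matrix.single i j q) * (1 + Matrix.single i j r)
      = 1 + (Matrix.single i j q + Matrix.single i j r)
        + Matrix.single i j q * Matrix.single i j r := by noncomm_ring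
    _ = _ := by rw [h0, add_zero]

lemma EU_zero (i j : Fin 5) (hij : j ≠ i) : EU i j hij 0 = 1 := by
  ext : 1
  show 1 + Matrix.single i j (0:ℚ) = 1
  simp

lemma EU_inv (i j : Fin 5) (hij : j ≠ i) (q : ℚ) : (EU i j hij q)⁻¹ = EU i j hij (-q) := by
  rw [eq_comm, eq_inv_iff_mul_eq_one, EU_mul, neg_add_cancel, EU_zero]

lemma EU_zpow (i j : Fin 5) (hij : j ≠ i) (q : ℚ) (k : ℤ) :
    EU i j hij q ^ k = EU i j hij (k * q) := by
  induction k using Int.induction_on with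
  | zero => simpa using (EU_zero i j hij).symm
  | succ n ih => rw [_root_.zpow_add_one, ih, EU_mul]; norm_num; ring_nf
  | pred n ih => rw [_root_.zpow_sub_one, ih, EU_inv, EU_mul]; norm_num; ring_nf

/-- Diagonal unit `diag (1, pⁿ, 1, 1, 1)`. -/
lemma vec_mul_pow (p : ℕ) (hp0 : (p : ℚ) ≠ 0) (m n : ℤ) :
    (fun i => ![1, (p : ℚ) ^ m, 1, 1, 1] i * ![1, (p : ℚ) ^ n, 1, 1, 1] i)
      = ![1, (p : ℚ) ^ (m + n), 1, 1, 1] := by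
  funext i
  fin_cases i <;> simp [← zpow_add₀ hp0]

lemma vec_one (p : ℕ) : ![1, (p : ℚ) ^ (0 : ℤ), 1, 1, 1] = fun _ => 1 := by
  funext i
  fin_cases i <;> simp

def DU (p : ℕ) (hp0 : (p : ℚ) ≠ 0) (n : ℤ) : (Matrix (Fin 5) (Fin 5) ℚ)ˣ where
  val := Matrix.diagonal ![1, (p : ℚ) ^ n, 1, 1, 1]
  inv := Matrix.diagonal ![1, (p : ℚ) ^ (-n), 1, 1, 1]
  val_inv := by
    rw [Matrix.diagonal_mul_diagonal, vec_mul_pow p hp0, add_neg_cancel, vec_one,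
      Matrix.diagonal_one]
  inv_val := by
    rw [Matrix.diagonal_mul_diagonal, vec_mul_pow p hp0, neg_add_cancel, vec_one,
      Matrix.diagonal_one]

@[simp] lemma DU_val (p : ℕ) (hp0 : (p : ℚ) ≠ 0) (n : ℤ) :
    (DU p hp0 n).val = Matrix.diagonal ![1, (p : ℚ) ^ n, 1, 1, 1] := rfl

lemma DU_mul (p : ℕ) (hp0 : (p : ℚ) ≠ 0) (m n : ℤ) :
    DU p hp0 m * DU p hp0 n = DU p hp0 (m + n) := by
  ext : 1
  show Matrix.diagonal _ * Matrix.diagonal _ = Matrix.diagonal _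
  rw [Matrix.diagonal_mul_diagonal, vec_mul_pow p hp0]

lemma DU_zero (p : ℕ) (hp0 : (p : ℚ) ≠ 0) : DU p hp0 0 = 1 := by
  ext : 1
  show Matrix.diagonal _ = 1
  rw [vec_one, Matrix.diagonal_one]


lemma DU_inv (p : ℕ) (hp0 : (p : ℚ) ≠ 0) (n : ℤ) : (DU p hp0 n)⁻¹ = DU p hp0 (-n) := by
  rw [eq_comm, eq_inv_iff_mul_eq_one, DU_mul, neg_add_cancel, DU_zero]

lemma DU_zpow (p : ℕ) (hp0 : (p : ℚ) ≠ 0) (n : ℤ) : DU p hp0 1 ^ n = DU p hp0 n := by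
  induction n using Int.induction_on with
  | zero => simpa using (DU_zero p hp0).symm
  | succ n ih => rw [_root_.zpow_add_one, ih, DU_mul]
  | pred n ih => rw [_root_.zpow_sub_one, ih, DU_inv, DU_mul, ← Int.sub_eq_add_neg]

lemma diag_mul_std (v : Fin 5 → ℚ) (i j : Fin 5) (q : ℚ) :
    Matrix.diagonal v * Matrix.single i j q = Matrix.single i j (v i * q) := by
  ext k l
  rw [Matrix.diagonal_mul]
  by_cases h : i = k ∧ j = l
  · obtain ⟨rfl, rfl⟩ := h
    simp [Matrix.single]
  · simp [Matrix.single, Matrix.of_apply, h]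

lemma std_mul_diag (v : Fin 5 → ℚ) (i j : Fin 5) (q : ℚ) :
    Matrix.single i j q * Matrix.diagonal v = Matrix.single i j (q * v j) := by
  ext k l
  rw [Matrix.mul_diagonal]
  by_cases h : i = k ∧ j = l
  · obtain ⟨rfl, rfl⟩ := h
    simp [Matrix.single]
  · simp [Matrix.single, Matrix.of_apply, h]

/-- Conjugation of an elementary unit by the diagonal unit. -/
lemma DU_conj (p : ℕ) (hp0 : (p : ℚ) ≠ 0) (n : ℤ) (i j : Fin 5) (hij : j ≠ i) (q : ℚ) :
    DU p hp0 n * EU i j hij q * DU p hp0 (-n) =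
      EU i j hij ((![1, (p : ℚ) ^ n, 1, 1, 1] i) * q * (![1, (p : ℚ) ^ (-n), 1, 1, 1] j)) := by
  ext : 1
  show Matrix.diagonal _ * (1 + Matrix.single i j q) * Matrix.diagonal _
      = 1 + Matrix.single i j _
  rw [mul_add, mul_one, add_mul, Matrix.diagonal_mul_diagonal, vec_mul_pow p hp0,
    add_neg_cancel, vec_one, Matrix.diagonal_one, diag_mul_std, std_mul_diag]

lemma stdBasisMatrix_neg (i j : Fin 5) (q : ℚ) :
    Matrix.single i j (-q) = -Matrix.single i j q := by
  ext k l
  by_cases h : i = k ∧ j = l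
  · obtain ⟨rfl, rfl⟩ := h; simp [Matrix.single]
  · simp [Matrix.single, Matrix.of_apply, h]

/-- Commutator of two elementary units. -/
lemma EU_commutator (i j k : Fin 5) (hji : j ≠ i) (hkj : k ≠ j) (hki : k ≠ i) (q r : ℚ) :
    EU i j hji q * EU j k hkj r * EU i j hji (-q) * EU j k hkj (-r) = EU i k hki (q * r) := by
  ext : 1
  show (1 + Matrix.single i j q) * (1 + Matrix.single j k r) *
      (1 + Matrix.single i j (-q)) * (1 + Matrix.single j k (-r))
      = 1 + Matrix.single i k (q * r)
  rw [stdBasisMatrix_neg, stdBasisMatrix_neg]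
  set A := Matrix.single i j q with hA
  set B := Matrix.single j k r with hB
  have hAB : A * B = Matrix.single i k (q * r) := Matrix.single_mul_single_same q i j k r
  have hBA : B * A = 0 := Matrix.single_mul_single_of_ne r j k _ hki q
  have hAA : A * A = 0 := Matrix.single_mul_single_of_ne q i j _ hji q
  have hBB : B * B = 0 := Matrix.single_mul_single_of_ne r j k _ hkj r
  have hCA : Matrix.single i k (q * r) * A = 0 :=
    Matrix.single_mul_single_of_ne (q * r) i k _ hki q
  have hCB : Matrix.single i k (q * r) * B = 0 :=
    Matrix.single_mul_single_of_ne (q * r) i k _ hkj r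
  have s2 : (1+A)*(1+B)*(1+(-A)) = 1 + B + A*B + -(A*A) + -(B*A) + -(A*(B*A)) := by
    noncomm_ring
  rw [hAA, hBA, mul_zero, neg_zero, add_zero, add_zero, add_zero] at s2
  have s3 : (1+B+A*B)*(1+(-B)) = 1 + A*B + -(B*B) + -(A*(B*B)) := by
    noncomm_ring
  rw [hBB, mul_zero, neg_zero, add_zero, add_zero] at s3
  rw [s2, s3, hAB]

lemma h01 : (1 : Fin 5) ≠ 0 := by decide
lemma h03 : (3 : Fin 5) ≠ 0 := by decide
lemma h04 : (4 : Fin 5) ≠ 0 := by decide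
lemma h13 : (3 : Fin 5) ≠ 1 := by decide
lemma h14 : (4 : Fin 5) ≠ 1 := by decide
lemma h34 : (4 : Fin 5) ≠ 3 := by decide

lemma big_product (p : ℕ) (hp0 : (p : ℚ) ≠ 0) (n : ℤ) (α β γ δ ε μ : ℚ) :
    (EU 0 1 h01 α * EU 0 3 h03 β * EU 0 4 h04 γ * EU 1 3 h13 δ * EU 1 4 h14 ε *
        EU 3 4 h34 μ * DU p hp0 n).val =
      Matrix.diagonal ![1, (p : ℚ) ^ n, 1, 1, 1]
        + Matrix.single 0 1 (α * (p : ℚ) ^ n)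
        + Matrix.single 0 3 (β + α * δ)
        + Matrix.single 0 4 (γ + α * ε + β * μ + α * δ * μ)
        + Matrix.single 1 3 δ
        + Matrix.single 1 4 (ε + δ * μ)
        + Matrix.single 3 4 μ := by
  set A1 := Matrix.single (0 : Fin 5) (1 : Fin 5) α with hA1
  set A2 := Matrix.single (0 : Fin 5) (3 : Fin 5) β with hA2
  set A3 := Matrix.single (0 : Fin 5) (4 : Fin 5) γ with hA3
  set A4 := Matrix.single (1 : Fin 5) (3 : Fin 5) δ with hA4
  set A5 := Matrix.single (1 : Fin 5) (4 : Fin 5) ε with hA5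
  set A6 := Matrix.single (3 : Fin 5) (4 : Fin 5) μ with hA6
  have emul : ∀ (i j k l : Fin 5) (c d : ℚ), j = k →
      Matrix.single i j c * Matrix.single k l d
        = Matrix.single i l (c * d) := by
    rintro i j k l c d rfl
    exact Matrix.single_mul_single_same c i j l d
  have ezero : ∀ (i j k l : Fin 5) (c d : ℚ), j ≠ k →
      Matrix.single i j c * Matrix.single k l d = 0 := by
    intro i j k l c d h
    exact Matrix.single_mul_single_of_ne c i j _ h d
  show (1 + A1) * (1 + A2) * (1 + A3) * (1 + A4) * (1 + A5) * (1 + A6)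
      * Matrix.diagonal ![1, (p : ℚ) ^ n, 1, 1, 1] = _
  have s2 : (1 + A1) * (1 + A2) = 1 + A1 + A2 + A1 * A2 := by noncomm_ring
  rw [ezero 0 1 0 3 α β (by decide)] at s2
  have s3 : (1 + A1 + A2 + 0) * (1 + A3) = 1 + A1 + A2 + A3 + A1 * A3 + A2 * A3 := by
    noncomm_ring
  rw [ezero 0 1 0 4 α γ (by decide), ezero 0 3 0 4 β γ (by decide)] at s3
  have s4 : (1 + A1 + A2 + A3 + 0 + 0) * (1 + A4)
      = 1 + A1 + A2 + A3 + A4 + A1 * A4 + A2 * A4 + A3 * A4 := by noncomm_ring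
  rw [emul 0 1 1 3 α δ rfl, ezero 0 3 1 3 β δ (by decide),
    ezero 0 4 1 3 γ δ (by decide)] at s4
  have s5 : (1 + A1 + A2 + A3 + A4 + Matrix.single 0 3 (α * δ) + 0 + 0) * (1 + A5)
      = 1 + A1 + A2 + A3 + A4 + Matrix.single 0 3 (α * δ)
        + A5 + A1 * A5 + A2 * A5 + A3 * A5 + A4 * A5
        + Matrix.single 0 3 (α * δ) * A5 := by noncomm_ring
  rw [emul 0 1 1 4 α ε rfl, ezero 0 3 1 4 β ε (by decide), ezero 0 4 1 4 γ ε (by decide),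
    ezero 1 3 1 4 δ ε (by decide), ezero 0 3 1 4 (α * δ) ε (by decide)] at s5
  have s6 : (1 + A1 + A2 + A3 + A4 + Matrix.single 0 3 (α * δ)
        + A5 + Matrix.single 0 4 (α * ε) + 0 + 0 + 0 + 0) * (1 + A6)
      = 1 + A1 + A2 + A3 + A4 + Matrix.single 0 3 (α * δ)
        + A5 + Matrix.single 0 4 (α * ε)
        + A6 + A1 * A6 + A2 * A6 + A3 * A6 + A4 * A6
        + Matrix.single 0 3 (α * δ) * A6 + A5 * A6
        + Matrix.single 0 4 (α * ε) * A6 := by noncomm_ring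
  rw [ezero 0 1 3 4 α μ (by decide), emul 0 3 3 4 β μ rfl, ezero 0 4 3 4 γ μ (by decide),
    emul 1 3 3 4 δ μ rfl, emul 0 3 3 4 (α * δ) μ rfl, ezero 1 4 3 4 ε μ (by decide),
    ezero 0 4 3 4 (α * ε) μ (by decide)] at s6
  rw [s2, s3, s4, s5, s6]
  simp only [hA1, hA2, hA3, hA4, hA5, hA6, add_mul, one_mul, zero_mul, add_zero, zero_add,
    std_mul_diag]
  norm_num [Matrix.cons_val_succ]
  simp only [Matrix.single_add, Matrix.cons_val, mul_one]
  abel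

/-- `K_p` is generated by `a = diag(1,p,1,1,1)`, `1+e₁₂`, `1+e₂₄`,
`1+e₂₅`, `1+e₄₅`; in particular it is finitely generated. -/
theorem Kp_finitely_generated (p : ℕ) (hp : p.Prime)
    (a e12 e24 e25 e45 : (Matrix (Fin 5) (Fin 5) ℚ)ˣ)
    (ha : a.val = Matrix.diagonal ![1, (p : ℚ), 1, 1, 1])
    (h12 : e12.val = 1 + Matrix.single 0 1 (1 : ℚ))
    (h24 : e24.val = 1 + Matrix.single 1 3 (1 : ℚ))
    (h25 : e25.val = 1 + Matrix.single 1 4 (1 : ℚ))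
    (h45 : e45.val = 1 + Matrix.single 3 4 (1 : ℚ)) :
    Subgroup.closure {a, e12, e24, e25, e45} = Kp p hp := by
  have hp0 : (p : ℚ) ≠ 0 := Nat.cast_ne_zero.mpr hp.ne_zero
  have hae : a = DU p hp0 1 := Units.ext (by rw [ha, DU_val, zpow_one])
  have he12 : e12 = EU 0 1 h01 1 := Units.ext (by rw [h12, EU_val])
  have he24 : e24 = EU 1 3 h13 1 := Units.ext (by rw [h24, EU_val])
  have he25 : e25 = EU 1 4 h14 1 := Units.ext (by rw [h25, EU_val])
  have he45 : e45 = EU 3 4 h34 1 := Units.ext (by rw [h45, EU_val])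
  set H := Subgroup.closure {a, e12, e24, e25, e45} with hH
  have haH : a ∈ H := Subgroup.subset_closure (by simp)
  have h12H : e12 ∈ H := Subgroup.subset_closure (by simp)
  have h24H : e24 ∈ H := Subgroup.subset_closure (by simp)
  have h25H : e25 ∈ H := Subgroup.subset_closure (by simp)
  have h45H : e45 ∈ H := Subgroup.subset_closure (by simp)
  have h1Zp : (1 : ℚ) ∈ Zp p := ⟨1, 0, by norm_num⟩
  have hDUH : ∀ n : ℤ, DU p hp0 n ∈ H := fun n => by
    rw [← DU_zpow p hp0 n, ← hae]; exact zpow_mem haH n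
  have hE01H : ∀ q ∈ Zp p, EU 0 1 h01 q ∈ H := by
    rintro q ⟨k, n, hk⟩
    have key : EU 0 1 h01 q = DU p hp0 n * e12 ^ (k : ℤ) * DU p hp0 (-(n : ℤ)) := by
      rw [he12, EU_zpow, DU_conj]
      congr 1
      norm_num [Matrix.cons_val_succ]
      field_simp
      linear_combination hk
    rw [key]
    exact mul_mem (mul_mem (hDUH n) (zpow_mem h12H k)) (hDUH (-(n : ℤ)))
  have hE13H : ∀ q ∈ Zp p, EU 1 3 h13 q ∈ H := by
    rintro q ⟨k, n, hk⟩
    have key : EU 1 3 h13 q = DU p hp0 (-(n : ℤ)) * e24 ^ (k : ℤ) * DU p hp0 (-(-(n : ℤ))) := by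
      rw [he24, EU_zpow, DU_conj]
      congr 1
      norm_num [Matrix.cons_val_succ, Matrix.cons_val]
      field_simp
      simp only [Matrix.cons_val]
      linear_combination hk
    rw [key]
    exact mul_mem (mul_mem (hDUH _) (zpow_mem h24H k)) (hDUH _)
  have hE14H : ∀ q ∈ Zp p, EU 1 4 h14 q ∈ H := by
    rintro q ⟨k, n, hk⟩
    have key : EU 1 4 h14 q = DU p hp0 (-(n : ℤ)) * e25 ^ (k : ℤ) * DU p hp0 (-(-(n : ℤ))) := by
      rw [he25, EU_zpow, DU_conj]
      congr 1
      norm_num [Matrix.cons_val_succ, Matrix.cons_val]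
      field_simp
      simp only [Matrix.cons_val]
      linear_combination hk
    rw [key]
    exact mul_mem (mul_mem (hDUH _) (zpow_mem h25H k)) (hDUH _)
  have hE03H : ∀ q ∈ Zp p, EU 0 3 h03 q ∈ H := by
    intro q hq
    have key : EU 0 1 h01 q * EU 1 3 h13 1 * EU 0 1 h01 (-q) * EU 1 3 h13 (-1)
        = EU 0 3 h03 (q * 1) := EU_commutator 0 1 3 h01 h13 h03 q 1
    rw [mul_one] at key
    rw [← key]
    exact mul_mem (mul_mem (mul_mem (hE01H q hq) (hE13H 1 h1Zp))
      (hE01H (-q) ((Zp p).neg_mem hq))) (hE13H (-1) ((Zp p).neg_mem h1Zp))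
  have hE04H : ∀ q ∈ Zp p, EU 0 4 h04 q ∈ H := by
    intro q hq
    have key : EU 0 1 h01 q * EU 1 4 h14 1 * EU 0 1 h01 (-q) * EU 1 4 h14 (-1)
        = EU 0 4 h04 (q * 1) := EU_commutator 0 1 4 h01 h14 h04 q 1
    rw [mul_one] at key
    rw [← key]
    exact mul_mem (mul_mem (mul_mem (hE01H q hq) (hE14H 1 h1Zp))
      (hE01H (-q) ((Zp p).neg_mem hq))) (hE14H (-1) ((Zp p).neg_mem h1Zp))
  have hE34H : ∀ m : ℤ, EU 3 4 h34 (m : ℚ) ∈ H := by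
    intro m
    have key : EU 3 4 h34 (m : ℚ) = e45 ^ m := by rw [he45, EU_zpow, mul_one]
    rw [key]
    exact zpow_mem h45H m
  refine le_antisymm ((Subgroup.closure_le _).mpr ?_) ?_
  · rintro x hx
    simp only [Set.mem_insert_iff, Set.mem_singleton_iff] at hx
    rcases hx with rfl | rfl | rfl | rfl | rfl
    · refine ⟨⟨1, ?_⟩, ⟨0, ?_⟩, ?_, ?_, ?_, ?_, ?_, ?_, ?_, ?_, ?_, ?_, ?_, ?_, ?_, ?_, ?_,
        ?_, ?_, ?_, ?_, ?_, ?_, ?_, ?_⟩ <;>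
        simp [ha, Matrix.diagonal_apply, (Zp p).zero_mem]
    · refine ⟨⟨0, ?_⟩, ⟨0, ?_⟩, ?_, ?_, ?_, ?_, ?_, ?_, ?_, ?_, ?_, ?_, ?_, ?_, ?_, ?_, ?_,
        ?_, ?_, ?_, ?_, ?_, ?_, ?_, ?_⟩ <;>
        simp [h12, Matrix.one_apply, Matrix.single, (Zp p).zero_mem, h1Zp]
    · refine ⟨⟨0, ?_⟩, ⟨0, ?_⟩, ?_, ?_, ?_, ?_, ?_, ?_, ?_, ?_, ?_, ?_, ?_, ?_, ?_, ?_, ?_,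
        ?_, ?_, ?_, ?_, ?_, ?_, ?_, ?_⟩ <;>
        simp [h24, Matrix.one_apply, Matrix.single, (Zp p).zero_mem, h1Zp]
    · refine ⟨⟨0, ?_⟩, ⟨0, ?_⟩, ?_, ?_, ?_, ?_, ?_, ?_, ?_, ?_, ?_, ?_, ?_, ?_, ?_, ?_, ?_,
        ?_, ?_, ?_, ?_, ?_, ?_, ?_, ?_⟩ <;>
        simp [h25, Matrix.one_apply, Matrix.single, (Zp p).zero_mem, h1Zp]
    · refine ⟨⟨0, ?_⟩, ⟨1, ?_⟩, ?_, ?_, ?_, ?_, ?_, ?_, ?_, ?_, ?_, ?_, ?_, ?_, ?_, ?_, ?_,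
        ?_, ?_, ?_, ?_, ?_, ?_, ?_, ?_⟩ <;>
        simp [h45, Matrix.one_apply, Matrix.single, (Zp p).zero_mem, h1Zp]
  · rintro M ⟨⟨n, m11⟩, ⟨m, m34⟩, m00, m22, m33, m44, a01, a03, a04, a13, a14,
      z02, z12, z23, z24, z10, z20, z21, z30, z31, z32, z40, z41, z42, z43⟩
    set α : ℚ := M.val 0 1 * (p : ℚ) ^ (-n) with hα
    set δ : ℚ := M.val 1 3 with hδ
    set ε : ℚ := M.val 1 4 - M.val 1 3 * (m : ℚ) with hε
    set β : ℚ := M.val 0 3 - α * δ with hβ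
    set γ : ℚ := M.val 0 4 - α * ε - M.val 0 3 * (m : ℚ) with hγ
    have hαZ : α ∈ Zp p := Zp.mul_mem a01 (Zp.zpow_mem hp0 (-n))
    have hδZ : δ ∈ Zp p := a13
    have hεZ : ε ∈ Zp p := (Zp p).sub_mem a14 (Zp.mul_mem a13 (Zp.intCast_mem p m))
    have hβZ : β ∈ Zp p := (Zp p).sub_mem a03 (Zp.mul_mem hαZ hδZ)
    have hγZ : γ ∈ Zp p := (Zp p).sub_mem ((Zp p).sub_mem a04 (Zp.mul_mem hαZ hεZ))
      (Zp.mul_mem a03 (Zp.intCast_mem p m))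
    have hMeq : M = EU 0 1 h01 α * EU 0 3 h03 β * EU 0 4 h04 γ * EU 1 3 h13 δ *
        EU 1 4 h14 ε * EU 3 4 h34 (m : ℚ) * DU p hp0 n := by
      refine Units.ext ?_
      rw [big_product]
      ext i j
      fin_cases i <;> fin_cases j <;>
        simp [Matrix.diagonal_apply, Matrix.single, Matrix.cons_val_succ,
          m11, m34, m00, m22, m33, m44,
          z02, z12, z23, z24, z10, z20, z21, z30, z31, z32, z40, z41, z42, z43]
      all_goals first
        | (rw [hα, mul_assoc, ← zpow_add₀ hp0, neg_add_cancel, zpow_zero, mul_one])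
        | (rw [hβ]; ring)
        | (rw [hε]; ring)
        | rfl
    rw [hMeq]
    exact mul_mem (mul_mem (mul_mem (mul_mem (mul_mem (mul_mem
      (hE01H α hαZ) (hE03H β hβZ)) (hE04H γ hγZ)) (hE13H δ hδZ))
      (hE14H ε hεZ)) (hE34H m)) (hDUH n)
end

section
/- For every prime p, let N ≤ K_p be the subgroup of elements of K_p with diagonal equal to the identity (i.e., with n = 0). Then N is a normal subgroup of K_p, N is nilpotent of nilpotency class 3, and the quotient K_p/N is isomorphic to ℤ. -/
open scoped commutatorElement

/-- The subgroup `N ≤ K_p` of elements with trivial diagonal (`n = 0`). -/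
def NKp (p : ℕ) (hp : p.Prime) : Subgroup ↥(Kp p hp) where
  carrier := {g | ((g : (Matrix (Fin 5) (Fin 5) ℚ)ˣ) : Matrix (Fin 5) (Fin 5) ℚ) 1 1 = 1}
  one_mem' := by
    show ((1 : (Matrix (Fin 5) (Fin 5) ℚ)ˣ) : Matrix (Fin 5) (Fin 5) ℚ) 1 1 = 1
    simp
  mul_mem' := by
    intro A B hA hB
    obtain ⟨-, -, -, -, -, -, -, -, -, -, -, -, a12, -, -, a10, -, -, -, -, -, -, -, -, -⟩ :=
      A.property
    obtain ⟨-, -, -, -, -, -, -, -, -, -, -, -, -, -, -, -, -, -, -, b31, -, -, b41, -, -⟩ :=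
      B.property
    show ((A : (Matrix (Fin 5) (Fin 5) ℚ)ˣ).val * (B : (Matrix (Fin 5) (Fin 5) ℚ)ˣ).val) 1 1 = 1
    rw [Matrix.mul_apply, Fin.sum_univ_five, a10, a12, hA, hB, b31, b41]
    ring
  inv_mem' := by
    intro A hA
    obtain ⟨-, -, -, -, -, -, -, -, -, -, -, -, a12, -, -, a10, -, -, -, -, -, -, -, -, -⟩ :=
      A.property
    obtain ⟨-, -, -, -, -, -, -, -, -, -, -, -, -, -, -, -, -, -, -, n31, -, -, n41, -, -⟩ :=
      (A⁻¹).property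
    have hn31 : (((A : (Matrix (Fin 5) (Fin 5) ℚ)ˣ))⁻¹ : (Matrix (Fin 5) (Fin 5) ℚ)ˣ).val 3 1 = 0 := n31
    have hn41 : (((A : (Matrix (Fin 5) (Fin 5) ℚ)ˣ))⁻¹ : (Matrix (Fin 5) (Fin 5) ℚ)ˣ).val 4 1 = 0 := n41
    have hprod : ((A : (Matrix (Fin 5) (Fin 5) ℚ)ˣ).val *
        ((A : (Matrix (Fin 5) (Fin 5) ℚ)ˣ)⁻¹ : (Matrix (Fin 5) (Fin 5) ℚ)ˣ).val) 1 1 = 1 := by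
      rw [← Units.val_mul, mul_inv_cancel]
      simp
    rw [Matrix.mul_apply, Fin.sum_univ_five, a10, a12, hA, hn31, hn41] at hprod
    show (((A : (Matrix (Fin 5) (Fin 5) ℚ)ˣ))⁻¹ : (Matrix (Fin 5) (Fin 5) ℚ)ˣ).val 1 1 = 1
    linarith [hprod]

namespace KpAux

variable {p : ℕ} {hp : p.Prime}

def mm (g : ↥(NKp p hp)) : Matrix (Fin 5) (Fin 5) ℚ := g.1.1.val

lemma mm_mul (g h : ↥(NKp p hp)) : mm (g * h) = mm g * mm h := rfl

lemma mm_one : mm (1 : ↥(NKp p hp)) = 1 := rfl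

lemma gfacts (g : ↥(NKp p hp)) :
    mm g 0 0 = 1 ∧ mm g 1 1 = 1 ∧ mm g 2 2 = 1 ∧ mm g 3 3 = 1 ∧ mm g 4 4 = 1 ∧
    mm g 0 2 = 0 ∧ mm g 1 2 = 0 ∧ mm g 2 3 = 0 ∧ mm g 2 4 = 0 ∧
    mm g 1 0 = 0 ∧ mm g 2 0 = 0 ∧ mm g 2 1 = 0 ∧ mm g 3 0 = 0 ∧ mm g 3 1 = 0 ∧
    mm g 3 2 = 0 ∧ mm g 4 0 = 0 ∧ mm g 4 1 = 0 ∧ mm g 4 2 = 0 ∧ mm g 4 3 = 0 := by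
  obtain ⟨-, -, a00, a22, a33, a44, -, -, -, -, -, a02, a12, a23, a24, a10, a20, a21,
    a30, a31, a32, a40, a41, a42, a43⟩ := g.1.2
  exact ⟨a00, g.2, a22, a33, a44, a02, a12, a23, a24, a10, a20, a21, a30, a31, a32,
    a40, a41, a42, a43⟩

lemma mulE (g h : ↥(NKp p hp)) :
    mm (g * h) 0 1 = mm g 0 1 + mm h 0 1 ∧
    mm (g * h) 1 3 = mm g 1 3 + mm h 1 3 ∧
    mm (g * h) 3 4 = mm g 3 4 + mm h 3 4 ∧
    mm (g * h) 0 3 = mm g 0 3 + mm h 0 3 + mm g 0 1 * mm h 1 3 ∧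
    mm (g * h) 1 4 = mm g 1 4 + mm h 1 4 + mm g 1 3 * mm h 3 4 ∧
    mm (g * h) 0 4 = mm g 0 4 + mm h 0 4 + mm g 0 1 * mm h 1 4 + mm g 0 3 * mm h 3 4 := by
  obtain ⟨a00, a11, a22, a33, a44, a02, a12, a23, a24, a10, a20, a21, a30, a31, a32,
    a40, a41, a42, a43⟩ := gfacts g
  obtain ⟨b00, b11, b22, b33, b44, b02, b12, b23, b24, b10, b20, b21, b30, b31, b32,
    b40, b41, b42, b43⟩ := gfacts h
  refine ⟨?_, ?_, ?_, ?_, ?_, ?_⟩ <;>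
    · rw [mm_mul, Matrix.mul_apply, Fin.sum_univ_five]
      simp only [a00, a11, a22, a33, a44, a02, a12, a23, a24, a10, a20, a21, a30, a31,
        a32, a40, a41, a42, a43, b00, b11, b22, b33, b44, b02, b12, b23, b24, b10, b20,
        b21, b30, b31, b32, b40, b41, b42, b43, one_mul, mul_one, mul_zero, zero_mul,
        add_zero, zero_add]
      ring

lemma one_entries :
    (1 : Matrix (Fin 5) (Fin 5) ℚ) 0 1 = 0 ∧ (1 : Matrix (Fin 5) (Fin 5) ℚ) 1 3 = 0 ∧
    (1 : Matrix (Fin 5) (Fin 5) ℚ) 3 4 = 0 ∧ (1 : Matrix (Fin 5) (Fin 5) ℚ) 0 3 = 0 ∧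
    (1 : Matrix (Fin 5) (Fin 5) ℚ) 1 4 = 0 ∧ (1 : Matrix (Fin 5) (Fin 5) ℚ) 0 4 = 0 := by
  refine ⟨?_, ?_, ?_, ?_, ?_, ?_⟩ <;> · rw [Matrix.one_apply_ne (by decide)]

end KpAux

namespace KpAux

variable {p : ℕ} {hp : p.Prime}

/-- Commutator identity: `⁅g,h⁆ * (h * g) = g * h`. -/
lemma comm_eq (g h : ↥(NKp p hp)) : ⁅g, h⁆ * (h * g) = g * h := by
  rw [commutatorElement_def]; group

def H1 (p : ℕ) (hp : p.Prime) : Subgroup ↥(NKp p hp) where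
  carrier := {g | mm g 0 1 = 0 ∧ mm g 1 3 = 0 ∧ mm g 3 4 = 0}
  one_mem' := by
    refine ⟨?_, ?_, ?_⟩ <;>
      · show mm (1 : ↥(NKp p hp)) _ _ = 0
        rw [mm_one, Matrix.one_apply_ne (by decide)]
  mul_mem' := by
    rintro a b ⟨a1, a2, a3⟩ ⟨b1, b2, b3⟩
    obtain ⟨e1, e2, e3, -, -, -⟩ := mulE a b
    exact ⟨by rw [e1, a1, b1, add_zero], by rw [e2, a2, b2, add_zero],
      by rw [e3, a3, b3, add_zero]⟩
  inv_mem' := by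
    rintro a ⟨a1, a2, a3⟩
    obtain ⟨e1, e2, e3, -, -, -⟩ := mulE a a⁻¹
    rw [mul_inv_cancel, mm_one] at e1 e2 e3
    rw [Matrix.one_apply_ne (by decide)] at e1 e2 e3
    refine ⟨by linarith [e1, a1], by linarith [e2, a2], by linarith [e3, a3]⟩

def H2 (p : ℕ) (hp : p.Prime) : Subgroup ↥(NKp p hp) where
  carrier := {g | mm g 0 1 = 0 ∧ mm g 1 3 = 0 ∧ mm g 3 4 = 0 ∧ mm g 0 3 = 0 ∧ mm g 1 4 = 0}
  one_mem' := by
    refine ⟨?_, ?_, ?_, ?_, ?_⟩ <;>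
      · show mm (1 : ↥(NKp p hp)) _ _ = 0
        rw [mm_one, Matrix.one_apply_ne (by decide)]
  mul_mem' := by
    rintro a b ⟨a1, a2, a3, a4, a5⟩ ⟨b1, b2, b3, b4, b5⟩
    obtain ⟨e1, e2, e3, e4, e5, -⟩ := mulE a b
    refine ⟨by rw [e1, a1, b1, add_zero], by rw [e2, a2, b2, add_zero],
      by rw [e3, a3, b3, add_zero], ?_, ?_⟩
    · rw [e4, a4, b4, a1]; ring
    · rw [e5, a5, b5, a2]; ring
  inv_mem' := by
    rintro a ⟨a1, a2, a3, a4, a5⟩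
    obtain ⟨e1, e2, e3, e4, e5, -⟩ := mulE a a⁻¹
    rw [mul_inv_cancel, mm_one] at e1 e2 e3 e4 e5
    rw [Matrix.one_apply_ne (by decide)] at e1 e2 e3 e4 e5
    rw [a1] at e1 e4; rw [a2] at e2 e5; rw [a3] at e3; rw [a4] at e4; rw [a5] at e5
    refine ⟨by linarith, by linarith, by linarith, by linarith, by linarith⟩

lemma step1 (g h : ↥(NKp p hp)) : ⁅g, h⁆ ∈ H1 p hp := by
  obtain ⟨c1, c2, c3, -, -, -⟩ := mulE ⁅g, h⁆ (h * g)
  rw [comm_eq] at c1 c2 c3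
  obtain ⟨gh1, gh2, gh3, -, -, -⟩ := mulE g h
  obtain ⟨hg1, hg2, hg3, -, -, -⟩ := mulE h g
  rw [gh1, hg1] at c1; rw [gh2, hg2] at c2; rw [gh3, hg3] at c3
  exact ⟨by linarith, by linarith, by linarith⟩

lemma step2 (g h : ↥(NKp p hp)) (hg : g ∈ H1 p hp) : ⁅g, h⁆ ∈ H2 p hp := by
  obtain ⟨g1, g2, g3⟩ := hg
  obtain ⟨u1, u2, u3⟩ := step1 g h
  obtain ⟨-, -, -, c4, c5, -⟩ := mulE ⁅g, h⁆ (h * g)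
  rw [comm_eq] at c4 c5
  rw [u1] at c4; rw [u2] at c5
  obtain ⟨-, hg2', hg3', hg4, hg5, -⟩ := mulE h g
  obtain ⟨-, -, -, gh4, gh5, -⟩ := mulE g h
  rw [gh4, g1] at c4
  rw [gh5, g2] at c5
  rw [hg4, g2] at c4
  rw [hg5, g3] at c5
  refine ⟨u1, u2, u3, by nlinarith, by nlinarith⟩

end KpAux

namespace KpAux

variable {p : ℕ} {hp : p.Prime}

lemma mm_inj {g h : ↥(NKp p hp)} (e : mm g = mm h) : g = h :=
  Subtype.ext (Subtype.ext (Units.ext e))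

lemma central_mul_comm (A B : Matrix (Fin 5) (Fin 5) ℚ)
    (g1 : A 0 1 = 0) (g2 : A 1 3 = 0) (g3 : A 3 4 = 0) (g4 : A 0 3 = 0) (g5 : A 1 4 = 0)
    (a00 : A 0 0 = 1) (a11 : A 1 1 = 1) (a22 : A 2 2 = 1) (a33 : A 3 3 = 1) (a44 : A 4 4 = 1)
    (a02 : A 0 2 = 0) (a12 : A 1 2 = 0) (a23 : A 2 3 = 0) (a24 : A 2 4 = 0)
    (a10 : A 1 0 = 0) (a20 : A 2 0 = 0) (a21 : A 2 1 = 0) (a30 : A 3 0 = 0)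
    (a31 : A 3 1 = 0) (a32 : A 3 2 = 0) (a40 : A 4 0 = 0) (a41 : A 4 1 = 0)
    (a42 : A 4 2 = 0) (a43 : A 4 3 = 0)
    (b00 : B 0 0 = 1) (b11 : B 1 1 = 1) (b22 : B 2 2 = 1) (b33 : B 3 3 = 1) (b44 : B 4 4 = 1)
    (b02 : B 0 2 = 0) (b12 : B 1 2 = 0) (b23 : B 2 3 = 0) (b24 : B 2 4 = 0)
    (b10 : B 1 0 = 0) (b20 : B 2 0 = 0) (b21 : B 2 1 = 0) (b30 : B 3 0 = 0)
    (b31 : B 3 1 = 0) (b32 : B 3 2 = 0) (b40 : B 4 0 = 0) (b41 : B 4 1 = 0)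
    (b42 : B 4 2 = 0) (b43 : B 4 3 = 0) :
    A * B = B * A := by
  have e0 : ∀ (h : 0 < 5), (⟨0, h⟩ : Fin 5) = 0 := fun _ => rfl
  have e1 : ∀ (h : 1 < 5), (⟨1, h⟩ : Fin 5) = 1 := fun _ => rfl
  have e2 : ∀ (h : 2 < 5), (⟨2, h⟩ : Fin 5) = 2 := fun _ => rfl
  have e3 : ∀ (h : 3 < 5), (⟨3, h⟩ : Fin 5) = 3 := fun _ => rfl
  have e4 : ∀ (h : 4 < 5), (⟨4, h⟩ : Fin 5) = 4 := fun _ => rfl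
  ext i j
  rw [Matrix.mul_apply, Matrix.mul_apply, Fin.sum_univ_five, Fin.sum_univ_five]
  fin_cases i <;> fin_cases j <;>
    simp only [e0, e1, e2, e3, e4, g1, g2, g3, g4, g5, a00, a11, a22, a33, a44, a02, a12, a23, a24, a10,
      a20, a21, a30, a31, a32, a40, a41, a42, a43, b00, b11, b22, b33, b44, b02, b12,
      b23, b24, b10, b20, b21, b30, b31, b32, b40, b41, b42, b43, one_mul, mul_one,
      mul_zero, zero_mul, add_zero, zero_add] <;>
    ring

lemma step3 (g h : ↥(NKp p hp)) (hg : g ∈ H2 p hp) : ⁅g, h⁆ = 1 := by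
  rw [commutatorElement_eq_one_iff_mul_comm]
  apply mm_inj
  obtain ⟨g1, g2, g3, g4, g5⟩ := hg
  obtain ⟨a00, a11, a22, a33, a44, a02, a12, a23, a24, a10, a20, a21, a30, a31, a32,
    a40, a41, a42, a43⟩ := gfacts g
  obtain ⟨b00, b11, b22, b33, b44, b02, b12, b23, b24, b10, b20, b21, b30, b31, b32,
    b40, b41, b42, b43⟩ := gfacts h
  rw [mm_mul, mm_mul]
  exact central_mul_comm (mm g) (mm h) g1 g2 g3 g4 g5 a00 a11 a22 a33 a44 a02 a12 a23
    a24 a10 a20 a21 a30 a31 a32 a40 a41 a42 a43 b00 b11 b22 b33 b44 b02 b12 b23 b24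
    b10 b20 b21 b30 b31 b32 b40 b41 b42 b43

end KpAux

namespace KpAux

lemma Zp.one_mem (p : ℕ) : (1 : ℚ) ∈ Zp p := ⟨1, 0, by norm_num⟩

def elemUnit (i j : Fin 5) (x : ℚ) (hij : j ≠ i) : (Matrix (Fin 5) (Fin 5) ℚ)ˣ where
  val := 1 + Matrix.single i j x
  inv := 1 + Matrix.single i j (-x)
  val_inv := by
    have h0 : Matrix.single i j x * Matrix.single i j (-x) = 0 :=
      Matrix.single_mul_single_of_ne (h := hij) ..
    have h1 : Matrix.single i j x + Matrix.single i j (-x) = 0 := by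
      rw [← Matrix.single_add, add_neg_cancel, Matrix.single_zero]
    calc (1 + Matrix.single i j x) * (1 + Matrix.single i j (-x))
        = 1 + (Matrix.single i j x + Matrix.single i j (-x)) +
            Matrix.single i j x * Matrix.single i j (-x) := by noncomm_ring
      _ = 1 := by rw [h0, h1, add_zero, add_zero]
  inv_val := by
    have h0 : Matrix.single i j (-x) * Matrix.single i j x = 0 :=
      Matrix.single_mul_single_of_ne (h := hij) ..
    have h1 : Matrix.single i j (-x) + Matrix.single i j x = 0 := by
      rw [← Matrix.single_add, neg_add_cancel, Matrix.single_zero]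
    calc (1 + Matrix.single i j (-x)) * (1 + Matrix.single i j x)
        = 1 + (Matrix.single i j (-x) + Matrix.single i j x) +
            Matrix.single i j (-x) * Matrix.single i j x := by noncomm_ring
      _ = 1 := by rw [h0, h1, add_zero, add_zero]

lemma elem_apply (i j : Fin 5) (x : ℚ) (a b : Fin 5) :
    (1 + Matrix.single i j x) a b =
      (if a = b then 1 else 0) + (if a = i ∧ b = j then x else 0) := by
  rw [Matrix.add_apply, Matrix.one_apply]
  congr 1
  by_cases h : a = i ∧ b = j
  · obtain ⟨rfl, rfl⟩ := h
    simp [Matrix.single_apply_same]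
  · rw [Matrix.single_apply_of_ne _ _ _ _ _ (fun hc => h ⟨hc.1.symm, hc.2.symm⟩),
      if_neg h]

lemma elemUnit_val (i j : Fin 5) (x : ℚ) (hij : j ≠ i) :
    (elemUnit i j x hij).val = 1 + Matrix.single i j x := rfl

def elA (p : ℕ) (hp : p.Prime) : ↥(NKp p hp) :=
  ⟨⟨elemUnit 0 1 1 (by decide), by
    refine ⟨⟨0, ?_⟩, ⟨0, ?_⟩, ?_, ?_, ?_, ?_, ?_, ?_, ?_, ?_, ?_, ?_, ?_, ?_, ?_, ?_,
      ?_, ?_, ?_, ?_, ?_, ?_, ?_, ?_, ?_⟩ <;>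
      simp [elemUnit_val, elem_apply, (Zp p).zero_mem, Zp.one_mem]⟩, by
    show (elemUnit 0 1 1 (by decide)).val 1 1 = 1
    simp [elemUnit_val, elem_apply]⟩

def elB (p : ℕ) (hp : p.Prime) : ↥(NKp p hp) :=
  ⟨⟨elemUnit 1 3 1 (by decide), by
    refine ⟨⟨0, ?_⟩, ⟨0, ?_⟩, ?_, ?_, ?_, ?_, ?_, ?_, ?_, ?_, ?_, ?_, ?_, ?_, ?_, ?_,
      ?_, ?_, ?_, ?_, ?_, ?_, ?_, ?_, ?_⟩ <;>
      simp [elemUnit_val, elem_apply, (Zp p).zero_mem, Zp.one_mem]⟩, by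
    show (elemUnit 1 3 1 (by decide)).val 1 1 = 1
    simp [elemUnit_val, elem_apply]⟩

def elD (p : ℕ) (hp : p.Prime) : ↥(NKp p hp) :=
  ⟨⟨elemUnit 3 4 1 (by decide), by
    refine ⟨⟨0, ?_⟩, ⟨(1 : ℤ), ?_⟩, ?_, ?_, ?_, ?_, ?_, ?_, ?_, ?_, ?_, ?_, ?_, ?_, ?_, ?_,
      ?_, ?_, ?_, ?_, ?_, ?_, ?_, ?_, ?_⟩ <;>
      simp [elemUnit_val, elem_apply, (Zp p).zero_mem, Zp.one_mem]⟩, by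
    show (elemUnit 3 4 1 (by decide)).val 1 1 = 1
    simp [elemUnit_val, elem_apply]⟩

variable {p : ℕ} {hp : p.Prime}

lemma mm_elA : mm (elA p hp) = 1 + Matrix.single 0 1 (1 : ℚ) := rfl
lemma mm_elB : mm (elB p hp) = 1 + Matrix.single 1 3 (1 : ℚ) := rfl
lemma mm_elD : mm (elD p hp) = 1 + Matrix.single 3 4 (1 : ℚ) := rfl

end KpAux

namespace KpAux

variable {p : ℕ} {hp : p.Prime}

lemma elA_entries : mm (elA p hp) 0 1 = 1 ∧ mm (elA p hp) 1 3 = 0 ∧ mm (elA p hp) 3 4 = 0 ∧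
    mm (elA p hp) 0 3 = 0 ∧ mm (elA p hp) 1 4 = 0 ∧ mm (elA p hp) 0 4 = 0 := by
  refine ⟨?_, ?_, ?_, ?_, ?_, ?_⟩ <;> · rw [mm_elA, elem_apply]; simp

lemma elB_entries : mm (elB p hp) 0 1 = 0 ∧ mm (elB p hp) 1 3 = 1 ∧ mm (elB p hp) 3 4 = 0 ∧
    mm (elB p hp) 0 3 = 0 ∧ mm (elB p hp) 1 4 = 0 ∧ mm (elB p hp) 0 4 = 0 := by
  refine ⟨?_, ?_, ?_, ?_, ?_, ?_⟩ <;> · rw [mm_elB, elem_apply]; simp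

lemma elD_entries : mm (elD p hp) 0 1 = 0 ∧ mm (elD p hp) 1 3 = 0 ∧ mm (elD p hp) 3 4 = 1 ∧
    mm (elD p hp) 0 3 = 0 ∧ mm (elD p hp) 1 4 = 0 ∧ mm (elD p hp) 0 4 = 0 := by
  refine ⟨?_, ?_, ?_, ?_, ?_, ?_⟩ <;> · rw [mm_elD, elem_apply]; simp

lemma u_entries :
    mm ⁅elA p hp, elB p hp⁆ 0 3 = 1 ∧ mm ⁅elA p hp, elB p hp⁆ 1 4 = 0 := by
  obtain ⟨a1, a2, a3, a4, a5, a6⟩ := elA_entries (p := p) (hp := hp)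
  obtain ⟨b1, b2, b3, b4, b5, b6⟩ := elB_entries (p := p) (hp := hp)
  obtain ⟨u1, u2, u3⟩ := step1 (elA p hp) (elB p hp)
  obtain ⟨-, -, -, c4, c5, -⟩ := mulE ⁅elA p hp, elB p hp⁆ (elB p hp * elA p hp)
  rw [comm_eq] at c4 c5
  rw [u1] at c4; rw [u2] at c5
  obtain ⟨-, -, -, ab4, ab5, -⟩ := mulE (elA p hp) (elB p hp)
  obtain ⟨-, ba2, ba3, ba4, ba5, -⟩ := mulE (elB p hp) (elA p hp)
  simp only [a1, a2, a3, a4, a5, b1, b2, b3, b4, b5, one_mul, mul_one, zero_mul,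
    mul_zero, add_zero, zero_add] at ab4 ab5 ba2 ba3 ba4 ba5
  simp only [ab4, ab5, ba3, ba4, ba5, one_mul, mul_one, zero_mul, mul_zero, add_zero,
    zero_add] at c4 c5
  exact ⟨by linarith, by linarith⟩

lemma c04 : mm ⁅⁅elA p hp, elB p hp⁆, elD p hp⁆ 0 4 = 1 := by
  obtain ⟨u4, u5⟩ := u_entries (p := p) (hp := hp)
  obtain ⟨u1, u2, u3⟩ := step1 (elA p hp) (elB p hp)
  obtain ⟨c1, c2, c3, c4, c5⟩ := step2 ⁅elA p hp, elB p hp⁆ (elD p hp)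
    (step1 (elA p hp) (elB p hp))
  obtain ⟨d1, d2, d3, d4, d5, d6⟩ := elD_entries (p := p) (hp := hp)
  obtain ⟨-, -, -, -, -, e6⟩ :=
    mulE ⁅⁅elA p hp, elB p hp⁆, elD p hp⁆ (elD p hp * ⁅elA p hp, elB p hp⁆)
  rw [comm_eq] at e6
  rw [c1, c4] at e6
  obtain ⟨-, -, -, -, -, ud6⟩ := mulE ⁅elA p hp, elB p hp⁆ (elD p hp)
  obtain ⟨-, -, -, -, -, du6⟩ := mulE (elD p hp) ⁅elA p hp, elB p hp⁆
  simp only [u1, u2, u3, u4, u5, d1, d2, d3, d4, d5, d6, one_mul, mul_one, zero_mul,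
    mul_zero, add_zero, zero_add] at ud6 du6
  simp only [ud6, du6, c2, c3, c5, one_mul, mul_one, zero_mul, mul_zero, add_zero,
    zero_add] at e6
  linarith

lemma c_ne_one : ⁅⁅elA p hp, elB p hp⁆, elD p hp⁆ ≠ 1 := by
  intro h
  have h04 := c04 (p := p) (hp := hp)
  rw [h, mm_one, Matrix.one_apply_ne (by decide)] at h04
  norm_num at h04

end KpAux

namespace KpAux

variable {p : ℕ} {hp : p.Prime}

lemma p_pos (hp : p.Prime) : (0 : ℚ) < (p : ℚ) := by
  exact_mod_cast hp.pos

lemma p_ne_one (hp : p.Prime) : (p : ℚ) ≠ 1 := by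
  exact_mod_cast hp.one_lt.ne'

noncomputable def phiFun (p : ℕ) (hp : p.Prime) (g : ↥(Kp p hp)) : ℤ := g.2.1.choose

lemma phiFun_spec (g : ↥(Kp p hp)) : g.1.val 1 1 = (p : ℚ) ^ (phiFun p hp g) :=
  g.2.1.choose_spec

lemma phiFun_unique {g : ↥(Kp p hp)} {n : ℤ} (h : g.1.val 1 1 = (p : ℚ) ^ n) :
    phiFun p hp g = n :=
  zpow_right_injective₀ (p_pos hp) (p_ne_one hp) ((phiFun_spec g).symm.trans h)

lemma mul11 (g h : ↥(Kp p hp)) : (g * h).1.val 1 1 = g.1.val 1 1 * h.1.val 1 1 := by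
  obtain ⟨-, -, -, -, -, -, -, -, -, -, -, -, a12, -, -, a10, -, -, -, -, -, -, -, -, -⟩ := g.2
  obtain ⟨-, -, -, -, -, -, -, -, -, -, -, -, -, -, -, -, -, -, -, b31, -, -, b41, -, -⟩ := h.2
  show ((g.1 : Matrix (Fin 5) (Fin 5) ℚ) * (h.1 : Matrix (Fin 5) (Fin 5) ℚ)) 1 1 = _
  rw [Matrix.mul_apply, Fin.sum_univ_five, a10, a12, b31, b41]
  ring

noncomputable def phi (p : ℕ) (hp : p.Prime) : ↥(Kp p hp) →* Multiplicative ℤ :=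
  MonoidHom.mk' (fun g => Multiplicative.ofAdd (phiFun p hp g)) (by
    intro g h
    show Multiplicative.ofAdd (phiFun p hp (g * h)) =
      Multiplicative.ofAdd (phiFun p hp g) * Multiplicative.ofAdd (phiFun p hp h)
    rw [← ofAdd_add]
    congr 1
    apply phiFun_unique
    rw [mul11, phiFun_spec g, phiFun_spec h, zpow_add₀ (p_pos hp).ne'])

def diagUnit (p : ℕ) (hp : p.Prime) (n : ℤ) : (Matrix (Fin 5) (Fin 5) ℚ)ˣ where
  val := Matrix.diagonal (fun i => if i = 1 then (p : ℚ) ^ n else 1)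
  inv := Matrix.diagonal (fun i => if i = 1 then (p : ℚ) ^ (-n) else 1)
  val_inv := by
    rw [Matrix.diagonal_mul_diagonal]
    have : ∀ i : Fin 5, (if i = 1 then (p : ℚ) ^ n else 1) *
        (if i = 1 then (p : ℚ) ^ (-n) else 1) = 1 := by
      intro i
      split
      · rw [← zpow_add₀ (p_pos hp).ne', add_neg_cancel, zpow_zero]
      · rw [one_mul]
    simp only [this]
    exact Matrix.diagonal_one
  inv_val := by
    rw [Matrix.diagonal_mul_diagonal]
    have : ∀ i : Fin 5, (if i = 1 then (p : ℚ) ^ (-n) else 1) *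
        (if i = 1 then (p : ℚ) ^ n else 1) = 1 := by
      intro i
      split
      · rw [← zpow_add₀ (p_pos hp).ne', neg_add_cancel, zpow_zero]
      · rw [one_mul]
    simp only [this]
    exact Matrix.diagonal_one

lemma diagUnit_mem (p : ℕ) (hp : p.Prime) (n : ℤ) : KpPred p (diagUnit p hp n).val := by
  refine ⟨⟨n, ?_⟩, ⟨0, ?_⟩, ?_, ?_, ?_, ?_, ?_, ?_, ?_, ?_, ?_, ?_, ?_, ?_, ?_, ?_,
    ?_, ?_, ?_, ?_, ?_, ?_, ?_, ?_, ?_⟩ <;>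
    simp [diagUnit, Matrix.diagonal_apply, (Zp p).zero_mem]

lemma phi_surjective : Function.Surjective (phi p hp) := by
  intro n
  refine ⟨⟨diagUnit p hp (Multiplicative.toAdd n), diagUnit_mem p hp _⟩, ?_⟩
  show Multiplicative.ofAdd (phiFun p hp _) = n
  have h1 : phiFun p hp (⟨diagUnit p hp (Multiplicative.toAdd n), diagUnit_mem p hp _⟩ :
      ↥(Kp p hp)) = Multiplicative.toAdd n := by
    apply phiFun_unique
    show (diagUnit p hp (Multiplicative.toAdd n)).val 1 1 = _
    simp [diagUnit, Matrix.diagonal_apply]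
  rw [h1]
  rfl

lemma phi_ker : (phi p hp).ker = NKp p hp := by
  ext g
  rw [MonoidHom.mem_ker]
  constructor
  · intro h
    have h0 : phiFun p hp g = 0 := by
      have := congrArg Multiplicative.toAdd h
      exact this
    show g.1.val 1 1 = 1
    rw [phiFun_spec g, h0, zpow_zero]
  · intro h
    have h1 : g.1.val 1 1 = (p : ℚ) ^ (0 : ℤ) := by
      rw [zpow_zero]; exact h
    have := phiFun_unique h1
    show Multiplicative.ofAdd (phiFun p hp g) = 1
    rw [this]
    rfl

end KpAux

open KpAux

/-- `N` is a normal subgroup of `K_p`, it is nilpotent of nilpotency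
class exactly 3, and the quotient `K_p/N` is isomorphic to `ℤ` (expressed by a
surjective homomorphism onto `ℤ` with kernel `N`). -/
theorem Kp_nilpotent_by_cyclic (p : ℕ) (hp : p.Prime) :
    (NKp p hp).Normal ∧
    (upperCentralSeries ↥(NKp p hp) 3 = ⊤ ∧ upperCentralSeries ↥(NKp p hp) 2 ≠ ⊤) ∧
    ∃ φ : ↥(Kp p hp) →* Multiplicative ℤ,
      Function.Surjective φ ∧ φ.ker = NKp p hp := by
  have hker : (phi p hp).ker = NKp p hp := phi_ker
  have hlcs1 : (⊤ : Subgroup ↥(NKp p hp)).lowerCentralSeries 1 ≤ H1 p hp := by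
    rw [show (1 : ℕ) = 0 + 1 from rfl, lowerCentralSeries_succ, lowerCentralSeries_zero]
    exact Subgroup.commutator_le.mpr fun g _ h _ => step1 g h
  have hlcs2 : (⊤ : Subgroup ↥(NKp p hp)).lowerCentralSeries 2 ≤ H2 p hp := by
    rw [show (2 : ℕ) = 1 + 1 from rfl, lowerCentralSeries_succ]
    exact le_trans (Subgroup.commutator_mono hlcs1 le_top)
      (Subgroup.commutator_le.mpr fun g hg h _ => step2 g h hg)
  have hlcs3 : (⊤ : Subgroup ↥(NKp p hp)).lowerCentralSeries 3 = ⊥ := by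
    rw [eq_bot_iff, show (3 : ℕ) = 2 + 1 from rfl, lowerCentralSeries_succ]
    exact le_trans (Subgroup.commutator_mono hlcs2 le_top)
      (Subgroup.commutator_le.mpr fun g hg h _ => Subgroup.mem_bot.mpr (step3 g h hg))
  have : Group.IsNilpotent ↥(NKp p hp) := nilpotent_iff_lowerCentralSeries.mpr ⟨3, hlcs3⟩
  refine ⟨hker ▸ (phi p hp).normal_ker, ⟨?_, ?_⟩, phi p hp, phi_surjective, hker⟩
  · exact upperCentralSeries_eq_top_iff_nilpotencyClass_le.mpr
      (lowerCentralSeries_eq_bot_iff_nilpotencyClass_le.mp hlcs3)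
  · intro htop
    have h2 : (⊤ : Subgroup ↥(NKp p hp)).lowerCentralSeries 2 = ⊥ :=
      lowerCentralSeries_eq_bot_iff_nilpotencyClass_le.mpr
        (upperCentralSeries_eq_top_iff_nilpotencyClass_le.mp htop)
    have hu : ⁅elA p hp, elB p hp⁆ ∈ (⊤ : Subgroup ↥(NKp p hp)).lowerCentralSeries 1 := by
      rw [show (1 : ℕ) = 0 + 1 from rfl, lowerCentralSeries_succ]
      exact Subgroup.commutator_mem_commutator
        (by rw [lowerCentralSeries_zero]; exact Subgroup.mem_top _) (Subgroup.mem_top _)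
    have hc : ⁅⁅elA p hp, elB p hp⁆, elD p hp⁆ ∈ (⊤ : Subgroup ↥(NKp p hp)).lowerCentralSeries 2 := by
      rw [show (2 : ℕ) = 1 + 1 from rfl, lowerCentralSeries_succ]
      exact Subgroup.commutator_mem_commutator hu (Subgroup.mem_top _)
    rw [h2, Subgroup.mem_bot] at hc
    exact c_ne_one hc
end

section
/- For every prime p, the center of K_p is isomorphic (as a group) to the additive group ℤ[1/p]. Consequently, for distinct primes p ≠ q, the groups K_p and K_q are not isomorphic. -/
open Matrix in
/-- A transvection as a unit. -/
def tvU (i j : Fin 5) (hij : i ≠ j) (c : ℚ) : (Matrix (Fin 5) (Fin 5) ℚ)ˣ where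
  val := transvection i j c
  inv := transvection i j (-c)
  val_inv := by
    simpa using transvection_mul_transvection_same (i := i) (j := j) hij c (-c)
  inv_val := by
    simpa using transvection_mul_transvection_same (i := i) (j := j) hij (-c) c

open Matrix in
lemma tvU_mem01 (p : ℕ) (hp : p.Prime) {c : ℚ} (hc : c ∈ Zp p) :
    tvU 0 1 (by decide) c ∈ Kp p hp := by
  refine ⟨⟨0, ?_⟩, ⟨0, ?_⟩, ?_, ?_, ?_, ?_, ?_, ?_, ?_, ?_, ?_, ?_, ?_, ?_, ?_, ?_, ?_,
      ?_, ?_, ?_, ?_, ?_, ?_, ?_, ?_⟩ <;>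
    simp +decide [tvU, transvection, single, one_apply] <;>
    first | exact hc | exact (Zp p).zero_mem

open Matrix in
lemma tvU_mem03 (p : ℕ) (hp : p.Prime) {c : ℚ} (hc : c ∈ Zp p) :
    tvU 0 3 (by decide) c ∈ Kp p hp := by
  refine ⟨⟨0, ?_⟩, ⟨0, ?_⟩, ?_, ?_, ?_, ?_, ?_, ?_, ?_, ?_, ?_, ?_, ?_, ?_, ?_, ?_, ?_,
      ?_, ?_, ?_, ?_, ?_, ?_, ?_, ?_⟩ <;>
    simp +decide [tvU, transvection, single, one_apply] <;>
    first | exact hc | exact (Zp p).zero_mem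

open Matrix in
lemma tvU_mem04 (p : ℕ) (hp : p.Prime) {c : ℚ} (hc : c ∈ Zp p) :
    tvU 0 4 (by decide) c ∈ Kp p hp := by
  refine ⟨⟨0, ?_⟩, ⟨0, ?_⟩, ?_, ?_, ?_, ?_, ?_, ?_, ?_, ?_, ?_, ?_, ?_, ?_, ?_, ?_, ?_,
      ?_, ?_, ?_, ?_, ?_, ?_, ?_, ?_⟩ <;>
    simp +decide [tvU, transvection, single, one_apply] <;>
    first | exact hc | exact (Zp p).zero_mem

open Matrix in
lemma tvU_mem34 (p : ℕ) (hp : p.Prime) :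
    tvU 3 4 (by decide) 1 ∈ Kp p hp := by
  refine ⟨⟨0, ?_⟩, ⟨1, ?_⟩, ?_, ?_, ?_, ?_, ?_, ?_, ?_, ?_, ?_, ?_, ?_, ?_, ?_, ?_, ?_,
      ?_, ?_, ?_, ?_, ?_, ?_, ?_, ?_⟩ <;>
    simp +decide [tvU, transvection, single, one_apply] <;>
    exact (Zp p).zero_mem

open Matrix in
def duU (p : ℕ) (hp0 : (p : ℚ) ≠ 0) : (Matrix (Fin 5) (Fin 5) ℚ)ˣ where
  val := diagonal (fun i => if i = 1 then (p : ℚ) else 1)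
  inv := diagonal (fun i => if i = 1 then (p : ℚ)⁻¹ else 1)
  val_inv := by
    rw [diagonal_mul_diagonal]
    ext a b
    by_cases h : a = b <;> simp [diagonal, h, one_apply] <;> split_ifs <;> field_simp
  inv_val := by
    rw [diagonal_mul_diagonal]
    ext a b
    by_cases h : a = b <;> simp [diagonal, h, one_apply] <;> split_ifs <;> field_simp

open Matrix in
lemma duU_mem (p : ℕ) (hp : p.Prime) :
    duU p (Nat.cast_ne_zero.mpr hp.ne_zero) ∈ Kp p hp := by
  refine ⟨⟨1, ?_⟩, ⟨0, ?_⟩, ?_, ?_, ?_, ?_, ?_, ?_, ?_, ?_, ?_, ?_, ?_, ?_, ?_, ?_, ?_,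
      ?_, ?_, ?_, ?_, ?_, ?_, ?_, ?_⟩ <;>
    simp +decide [duU, diagonal] <;>
    exact (Zp p).zero_mem

lemma one_mem_Zp (p : ℕ) : (1 : ℚ) ∈ Zp p := ⟨1, 0, by norm_num⟩

open Matrix in
lemma center_entries {p : ℕ} {hp : p.Prime} {M : ↥(Kp p hp)}
    (h : M ∈ Subgroup.center ↥(Kp p hp)) :
    M.val.val 0 1 = 0 ∧ M.val.val 0 3 = 0 ∧ M.val.val 1 1 = 1 ∧
    M.val.val 1 3 = 0 ∧ M.val.val 1 4 = 0 ∧ M.val.val 3 4 = 0 := by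
  rw [Subgroup.mem_center_iff] at h
  have hp0 : (p : ℚ) ≠ 0 := Nat.cast_ne_zero.mpr hp.ne_zero
  have hpne1 : (p : ℚ) ≠ 1 := by
    intro hh
    exact hp.one_lt.ne' (by exact_mod_cast hh)
  have h00 : M.val.val 0 0 = 1 := M.2.2.2.1
  -- commute with A = transvection 0 1
  have hA : transvection 0 1 (1:ℚ) * M.val.val = M.val.val * transvection 0 1 1 := by
    have := h ⟨tvU 0 1 (by decide) 1, tvU_mem01 p hp (one_mem_Zp p)⟩
    rw [Subtype.ext_iff, Units.ext_iff] at this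
    exact this
  have hB : transvection 0 3 (1:ℚ) * M.val.val = M.val.val * transvection 0 3 1 := by
    have := h ⟨tvU 0 3 (by decide) 1, tvU_mem03 p hp (one_mem_Zp p)⟩
    rw [Subtype.ext_iff, Units.ext_iff] at this
    exact this
  have hMm : transvection 3 4 (1:ℚ) * M.val.val = M.val.val * transvection 3 4 1 := by
    have := h ⟨tvU 3 4 (by decide) 1, tvU_mem34 p hp⟩
    rw [Subtype.ext_iff, Units.ext_iff] at this
    exact this
  have hT : diagonal (fun i => if i = 1 then (p : ℚ) else 1) * M.val.val
      = M.val.val * diagonal (fun i => if i = 1 then (p : ℚ) else 1) := by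
    have := h ⟨duU p hp0, duU_mem p hp⟩
    rw [Subtype.ext_iff, Units.ext_iff] at this
    exact this
  have e11 : M.val.val 1 1 = 1 := by
    have := congrFun (congrFun hA 0) 1
    rw [transvection_mul_apply_same, mul_transvection_apply_same] at this
    rw [h00] at this
    linarith
  have e01 : M.val.val 0 1 = 0 := by
    have := congrFun (congrFun hT 0) 1
    rw [diagonal_mul, mul_diagonal] at this
    simp +decide at this
    have h2 : M.val.val 0 1 * ((p : ℚ) - 1) = 0 := by linarith
    rcases mul_eq_zero.mp h2 with h3 | h3
    · exact h3
    · exact absurd (by linarith : (p : ℚ) = 1) hpne1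
  have e13 : M.val.val 1 3 = 0 := by
    have := congrFun (congrFun hT 1) 3
    rw [diagonal_mul, mul_diagonal] at this
    simp +decide at this
    have h2 : M.val.val 1 3 * ((p : ℚ) - 1) = 0 := by linarith
    rcases mul_eq_zero.mp h2 with h3 | h3
    · exact h3
    · exact absurd (by linarith : (p : ℚ) = 1) hpne1
  have e14 : M.val.val 1 4 = 0 := by
    have := congrFun (congrFun hA 0) 4
    simp +decide [transvection_mul_apply_same, mul_transvection_apply_of_ne] at this
    linarith
  have e03 : M.val.val 0 3 = 0 := by
    have := congrFun (congrFun hMm 0) 4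
    simp +decide [transvection_mul_apply_of_ne, mul_transvection_apply_same] at this
    linarith
  have e34 : M.val.val 3 4 = 0 := by
    have := congrFun (congrFun hB 0) 4
    simp +decide [transvection_mul_apply_same, mul_transvection_apply_of_ne] at this
    linarith
  exact ⟨e01, e03, e11, e13, e14, e34⟩

set_option maxHeartbeats 1000000 in
open Matrix in
lemma central_of_entries {p : ℕ} {hp : p.Prime} (M : ↥(Kp p hp))
    (e01 : M.val.val 0 1 = 0) (e03 : M.val.val 0 3 = 0) (e11 : M.val.val 1 1 = 1)
    (e13 : M.val.val 1 3 = 0) (e14 : M.val.val 1 4 = 0) (e34 : M.val.val 3 4 = 0) :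
    M ∈ Subgroup.center ↥(Kp p hp) := by
  rw [Subgroup.mem_center_iff]
  intro g
  obtain ⟨_, _, m00, m22, m33, m44, _, _, _, _, _, m02, m12, m23, m24,
    m10, m20, m21, m30, m31, m32, m40, m41, m42, m43⟩ := M.2
  obtain ⟨_, _, g00, g22, g33, g44, _, _, _, _, _, g02, g12, g23, g24,
    g10, g20, g21, g30, g31, g32, g40, g41, g42, g43⟩ := g.2
  refine Subtype.ext (Units.ext ?_)
  show g.val.val * M.val.val = M.val.val * g.val.val
  ext i j
  rw [Matrix.mul_apply, Matrix.mul_apply, Fin.sum_univ_five, Fin.sum_univ_five]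
  fin_cases i <;> fin_cases j <;>
    simp [e01, e03, e11, e13, e14, e34, m00, m22, m33, m44, m02, m12, m23, m24,
      m10, m20, m21, m30, m31, m32, m40, m41, m42, m43,
      g00, g22, g33, g44, g02, g12, g23, g24,
      g10, g20, g21, g30, g31, g32, g40, g41, g42, g43,
      one_mul, mul_one, mul_zero, zero_mul, add_zero, zero_add] <;>
    first | rfl | ring

open Matrix in
lemma central_matrix_eq {p : ℕ} {hp : p.Prime} {M : ↥(Kp p hp)}
    (h : M ∈ Subgroup.center ↥(Kp p hp)) :
    M.val.val = transvection 0 4 (M.val.val 0 4) := by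
  obtain ⟨e01, e03, e11, e13, e14, e34⟩ := center_entries h
  obtain ⟨-, -, m00, m22, m33, m44, -, -, -, -, -, m02, m12, m23, m24,
    m10, m20, m21, m30, m31, m32, m40, m41, m42, m43⟩ := M.2
  ext i j
  fin_cases i <;> fin_cases j <;>
    simp [transvection, single, one_apply, e01, e03, e11, e13, e14, e34,
      m00, m22, m33, m44, m02, m12, m23, m24, m10, m20, m21, m30, m31, m32,
      m40, m41, m42, m43]

lemma center_mul_apply04 {p : ℕ} {hp : p.Prime}
    (M N : ↥(Subgroup.center ↥(Kp p hp))) :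
    ((M * N : ↥(Subgroup.center ↥(Kp p hp))) : ↥(Kp p hp)).val.val 0 4
      = M.val.val.val 0 4 + N.val.val.val 0 4 := by
  obtain ⟨e01, e03, e11, e13, e14, e34⟩ := center_entries M.2
  obtain ⟨f01, f03, f11, f13, f14, f34⟩ := center_entries N.2
  have m00 : M.val.val.val 0 0 = 1 := M.val.2.2.2.1
  have m02 : M.val.val.val 0 2 = 0 := M.val.2.2.2.2.2.2.2.2.2.2.2.2.1
  have n44 : N.val.val.val 4 4 = 1 := N.val.2.2.2.2.2.2.1
  have n24 : N.val.val.val 2 4 = 0 := N.val.2.2.2.2.2.2.2.2.2.2.2.2.2.2.2.1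
  show (M.val.val.val * N.val.val.val) 0 4 = _
  rw [Matrix.mul_apply, Fin.sum_univ_five, e01, e03, m00, m02, n44, n24, f14, f34]
  ring

open Matrix in
def centerHom (p : ℕ) (hp : p.Prime) :
    Additive ↥(Subgroup.center ↥(Kp p hp)) →+ ↥(Zp p) where
  toFun := fun M =>
    ⟨(Additive.toMul M).val.val.val 0 4, (Additive.toMul M).val.2.2.2.2.2.2.2.2.2.1⟩
  map_zero' := by
    apply Subtype.ext
    show ((1 : (Matrix (Fin 5) (Fin 5) ℚ)ˣ) : Matrix (Fin 5) (Fin 5) ℚ) 0 4 = 0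
    simp [Matrix.one_apply]
  map_add' := by
    intro M N
    apply Subtype.ext
    exact center_mul_apply04 (Additive.toMul M) (Additive.toMul N)

open Matrix in
noncomputable def centerEquiv (p : ℕ) (hp : p.Prime) :
    Additive ↥(Subgroup.center ↥(Kp p hp)) ≃+ ↥(Zp p) := by
  refine AddEquiv.ofBijective (centerHom p hp) ⟨?_, ?_⟩
  · intro M N h
    have h04 : (Additive.toMul M).val.val.val 0 4 = (Additive.toMul N).val.val.val 0 4 :=
      congrArg Subtype.val h
    have := central_matrix_eq (Additive.toMul M).2
    apply Additive.toMul.injective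
    apply Subtype.ext
    apply Subtype.ext
    apply Units.ext
    rw [central_matrix_eq (Additive.toMul M).2, central_matrix_eq (Additive.toMul N).2, h04]
  · intro x
    refine ⟨Additive.ofMul ⟨⟨tvU 0 4 (by decide) x.1, tvU_mem04 p hp x.2⟩,
      central_of_entries _ ?_ ?_ ?_ ?_ ?_ ?_⟩, ?_⟩
    · show transvection 0 4 x.1 0 1 = 0
      simp +decide [transvection, single, one_apply]
    · show transvection 0 4 x.1 0 3 = 0
      simp +decide [transvection, single, one_apply]
    · show transvection 0 4 x.1 1 1 = 1
      simp +decide [transvection, single, one_apply]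
    · show transvection 0 4 x.1 1 3 = 0
      simp +decide [transvection, single, one_apply]
    · show transvection 0 4 x.1 1 4 = 0
      simp +decide [transvection, single, one_apply]
    · show transvection 0 4 x.1 3 4 = 0
      simp +decide [transvection, single, one_apply]
    · apply Subtype.ext
      show transvection 0 4 x.1 0 4 = x.1
      simp +decide [transvection, single, one_apply]

def centerMulEquiv {G H : Type*} [Group G] [Group H] (e : G ≃* H) :
    ↥(Subgroup.center G) ≃* ↥(Subgroup.center H) where
  toFun z := ⟨e z, by
    rw [Subgroup.mem_center_iff]
    intro h
    calc h * e z = e (e.symm h * z) := by simp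
      _ = e (z * e.symm h) := by rw [Subgroup.mem_center_iff.mp z.2 (e.symm h)]
      _ = e z * h := by simp⟩
  invFun z := ⟨e.symm z, by
    rw [Subgroup.mem_center_iff]
    intro h
    calc h * e.symm z = e.symm (e h * z) := by simp
      _ = e.symm (z * e h) := by rw [Subgroup.mem_center_iff.mp z.2 (e h)]
      _ = e.symm z * h := by simp⟩
  left_inv z := by ext; simp
  right_inv z := by ext; simp
  map_mul' a b := by ext; simp

theorem Kp_center_and_nonisomorphism' :
    (∀ (p : ℕ) (hp : p.Prime),
      Nonempty (Additive ↥(Subgroup.center ↥(Kp p hp)) ≃+ ↥(Zp p))) ∧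
    ∀ (p q : ℕ) (hp : p.Prime) (hq : q.Prime), p ≠ q →
      IsEmpty (↥(Kp p hp) ≃* ↥(Kp q hq)) := by
  refine ⟨fun p hp => ⟨centerEquiv p hp⟩, ?_⟩
  intro p q hp hq hpq
  constructor
  intro e
  have hp0 : (p : ℚ) ≠ 0 := Nat.cast_ne_zero.mpr hp.ne_zero
  let F : ↥(Zp p) ≃+ ↥(Zp q) :=
    ((centerEquiv p hp).symm.trans (MulEquiv.toAdditive (centerMulEquiv e))).trans
      (centerEquiv q hq)
  set x : ↥(Zp p) := F.symm ⟨1, one_mem_Zp q⟩ with hx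
  obtain ⟨k, n, hkn⟩ := x.2
  have hy : ((x : ℚ) / (p : ℚ)) ∈ Zp p := by
    refine ⟨k, n + 1, ?_⟩
    have h1 : (x : ℚ) / p * (p : ℚ) ^ (n + 1) = (x : ℚ) * (p : ℚ) ^ n * ((p : ℚ)⁻¹ * p) := by
      rw [pow_succ]; ring
    rw [h1, inv_mul_cancel₀ hp0, mul_one, hkn]
  set y : ↥(Zp p) := ⟨_, hy⟩ with hy'
  have hpy : p • y = x := by
    apply Subtype.ext
    push_cast
    show p • ((x : ℚ) / p) = (x : ℚ)
    rw [nsmul_eq_mul]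
    field_simp
  have hFy : p • F y = ⟨1, one_mem_Zp q⟩ := by
    rw [← map_nsmul, hpy, hx]
    exact F.apply_symm_apply _
  have hval : (p : ℚ) * ((F y : ℚ)) = 1 := by
    have h4 := congrArg Subtype.val hFy
    have h5 : ((p • F y : ↥(Zp q)) : ℚ) = p • ((F y : ℚ)) := by push_cast; ring
    rw [h5] at h4
    rw [nsmul_eq_mul] at h4
    exact h4
  obtain ⟨k', n', hk'⟩ := (F y).2
  have hq' : (q : ℚ) ^ n' = (p : ℚ) * k' := by
    have h2 : (p : ℚ) * (((F y : ℚ)) * (q : ℚ) ^ n') = (p : ℚ) * k' := by rw [hk']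
    calc (q : ℚ) ^ n' = ((p : ℚ) * (F y : ℚ)) * (q : ℚ) ^ n' := by rw [hval, one_mul]
      _ = (p : ℚ) * ((F y : ℚ) * (q : ℚ) ^ n') := by ring
      _ = (p : ℚ) * k' := h2
  have hz : (q : ℤ) ^ n' = (p : ℤ) * k' := by exact_mod_cast hq'
  have hdvd : (p : ℤ) ∣ (q : ℤ) ^ n' := ⟨k', hz⟩
  have hdvd2 : (p : ℤ) ∣ (q : ℤ) := (Nat.prime_iff_prime_int.mp hp).dvd_of_dvd_pow hdvd
  have : p = q := (Nat.prime_dvd_prime_iff_eq hp hq).mp (Int.natCast_dvd_natCast.mp hdvd2)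
  exact hpq this
/-- the center of `K_p` is isomorphic, as a group, to the additive group
`ℤ[1/p]`; consequently `K_p ≇ K_q` for distinct primes `p ≠ q`. -/
theorem Kp_center_and_nonisomorphism :
    (∀ (p : ℕ) (hp : p.Prime),
      Nonempty (Additive ↥(Subgroup.center ↥(Kp p hp)) ≃+ ↥(Zp p))) ∧
    ∀ (p q : ℕ) (hp : p.Prime) (hq : q.Prime), p ≠ q →
      IsEmpty (↥(Kp p hp) ≃* ↥(Kp q hq)) := by
  exact Kp_center_and_nonisomorphism'
end
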